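/- (Generalized Watts theorem, essential surjectivity) Let A be a cocomplete k-linear abelian category and F : Mod R → A a k-linear right exact functor commuting with direct sums. Set 𝓕 = F(R) with left R-module structure ρ(x) = F(μ_x). Then F is naturally isomorphic to − ⊗_R 𝓕, where − ⊗_R 𝓕 denotes the left adjoint of Hom_A(𝓕, −) : A → Mod R. -/

import Mathlib

open CategoryTheory CategoryTheory.Limits MulOpposite

universe u

section Preamble

variable (k : Type*) [CommRing k] (R : Type u) [Ring R] [Algebra k R]
variable (A : Type*) [Category.{u} A] [Preadditive A] [CategoryTheory.Linear k A]

/-- A left `R`-module in the `k`-linear category `A`: an object together with a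
ring homomorphism `ρ : R → End 𝓕` which is `k`-linear, i.e. a `k`-algebra homomorphism. -/
structure LMod where
  X : A
  ρ : R →+* End X
  algebraMap_smul' : ∀ a : k, ρ (algebraMap k R a) = a • (𝟙 X)

variable {k R A}

/-- the `k`-module structure on right `R`-modules obtained by restriction of scalars -/
noncomputable instance (M : ModuleCat.{u} Rᵐᵒᵖ) : Module k M :=
  RestrictScalars.module k Rᵐᵒᵖ M

instance (M : ModuleCat.{u} Rᵐᵒᵖ) : IsScalarTower k Rᵐᵒᵖ M :=
  RestrictScalars.isScalarTower k Rᵐᵒᵖ M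

/-- The `k`-linear structure on the category of right `R`-modules, `a • m = m · γ(a)`. -/
noncomputable instance : CategoryTheory.Linear k (ModuleCat.{u} Rᵐᵒᵖ) where
  homModule _ _ := ModuleCat.Hom.instModule
  smul_comp := by
    intros
    ext
    dsimp only [ModuleCat.hom_comp, ModuleCat.hom_smul, LinearMap.comp_apply]
    rw [LinearMap.smul_apply, LinearMap.smul_apply, LinearMap.map_smul_of_tower]
    rfl

/-- `Hom_A(𝓕, N)` is a right `R`-module via `α · r := ρ(r) ≫ α`. -/
instance homRMod (F : LMod k R A) (N : A) : Module Rᵐᵒᵖ (F.X ⟶ N) where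
  smul r α := F.ρ r.unop ≫ α
  one_smul α := by show F.ρ _ ≫ α = α; simp
  mul_smul r s α := by
    show F.ρ _ ≫ α = F.ρ _ ≫ F.ρ _ ≫ α
    rw [unop_mul, map_mul, End.mul_def, Category.assoc]
  smul_zero r := by show _ ≫ (0 : F.X ⟶ N) = 0; simp
  smul_add r α β := by show _ ≫ (α + β) = _ ≫ α + _ ≫ β; simp
  add_smul r s α := by
    show F.ρ _ ≫ α = F.ρ _ ≫ α + F.ρ _ ≫ α
    rw [MulOpposite.unop_add, map_add]; exact Preadditive.add_comp _ _ _ _ _ _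
  zero_smul α := by show F.ρ _ ≫ α = 0; rw [MulOpposite.unop_zero, map_zero]; exact Limits.zero_comp

lemma homRMod_smul_def (F : LMod k R A) {N : A} (r : Rᵐᵒᵖ) (α : F.X ⟶ N) :
    r • α = F.ρ r.unop ≫ α := rfl

/-- The functor `Hom_A(𝓕, -) : A ⥤ Mod R`. -/
noncomputable def homFunctor (F : LMod k R A) : A ⥤ ModuleCat.{u} Rᵐᵒᵖ where
  obj N := ModuleCat.of Rᵐᵒᵖ (F.X ⟶ N)
  map {N N'} f := ModuleCat.ofHom
    { toFun := fun α => α ≫ f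
      map_add' := fun α β => Preadditive.add_comp _ _ _ _ _ _
      map_smul' := fun r α => by
        show (F.ρ r.unop ≫ α) ≫ f = F.ρ r.unop ≫ (α ≫ f)
        rw [Category.assoc] }
  map_id N := by ext α; exact Category.comp_id α
  map_comp f g := by ext α; exact (Category.assoc _ _ _).symm

/-- `R` as a right module over itself. -/
noncomputable abbrev RR : ModuleCat.{u} Rᵐᵒᵖ := ModuleCat.of Rᵐᵒᵖ Rᵐᵒᵖ

variable (R) in
/-- left multiplication `μ_x` by `x` on `R`, a right `R`-module map -/
def mulMap (x : R) : (RR : ModuleCat.{u} Rᵐᵒᵖ) ⟶ RR := ModuleCat.ofHom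
  { toFun := fun r => op (x * r.unop)
    map_add' := fun r s => by
      apply unop_injective
      show x * (r + s).unop = _
      rw [show (r + s).unop = r.unop + s.unop from rfl, mul_add]; rfl
    map_smul' := fun s t => by
      apply unop_injective
      show x * (s • t).unop = ((s • op (x * t.unop)).unop)
      rw [show (s • t).unop = t.unop * s.unop from rfl,
        show (s • op (x * t.unop)).unop = (x * t.unop) * s.unop from rfl, mul_assoc] }

/-- Morphisms `𝓕 → 𝓖` of left `R`-modules in `A` induce natural transformations
`Hom_A(𝓖,-) ⟶ Hom_A(𝓕,-)`. -/
noncomputable def homPre {F G : LMod k R A} (φ : F.X ⟶ G.X)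
    (h : ∀ r : R, F.ρ r ≫ φ = φ ≫ G.ρ r) : homFunctor G ⟶ homFunctor F where
  app N := ModuleCat.ofHom
    { toFun := fun α => φ ≫ α
      map_add' := fun α β => Preadditive.comp_add _ _ _ _ _ _
      map_smul' := fun r α => by
        show φ ≫ G.ρ r.unop ≫ α = F.ρ r.unop ≫ φ ≫ α
        rw [← Category.assoc, ← h, Category.assoc] }
  naturality N N' f := by ext α; exact (Category.assoc _ _ _).symm

/-- `M ⊗ φ` : the natural transformation `- ⊗_R 𝓕 ⟶ - ⊗_R 𝓖` induced by `φ : 𝓕 ⟶ 𝓖`,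
obtained as the conjugate (mate) of `homPre φ`. -/
noncomputable def tensorMap {F G : LMod k R A} {TF TG : ModuleCat.{u} Rᵐᵒᵖ ⥤ A}
    (adjF : TF ⊣ homFunctor F) (adjG : TG ⊣ homFunctor G) (φ : F.X ⟶ G.X)
    (h : ∀ r : R, F.ρ r ≫ φ = φ ≫ G.ρ r) : TF ⟶ TG :=
  (conjugateEquiv adjG adjF).symm (homPre φ h)

/-- The canonical map `ξ_𝓕 : 𝓕 ⟶ R ⊗_R 𝓕`. -/
noncomputable def xi {F : LMod k R A} {TF : ModuleCat.{u} Rᵐᵒᵖ ⥤ A}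
    (adjF : TF ⊣ homFunctor F) : F.X ⟶ TF.obj RR :=
  (adjF.unit.app RR).hom (1 : Rᵐᵒᵖ)

end Preamble

section WattsAux

open CategoryTheory.Limits

variable {k : Type*} [CommRing k] {R : Type u} [Ring R] [Algebra k R]
variable {A : Type*} [Category.{u} A] [Preadditive A] [CategoryTheory.Linear k A]

/-- the map `R → M`, `r ↦ r • m`, as a linear map. -/
def ellLin (M : ModuleCat.{u} Rᵐᵒᵖ) (m : M) : Rᵐᵒᵖ →ₗ[Rᵐᵒᵖ] M where
  toFun r := r • m
  map_add' r s := add_smul r s m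
  map_smul' r s := by simp [smul_eq_mul, mul_smul]

/-- the map `R → M`, `r ↦ r • m`, as a morphism in `ModuleCat Rᵐᵒᵖ`. -/
def ellMap (M : ModuleCat.{u} Rᵐᵒᵖ) (m : M) : (RR : ModuleCat.{u} Rᵐᵒᵖ) ⟶ M :=
  ModuleCat.ofHom (ellLin M m)

lemma ellMap_apply (M : ModuleCat.{u} Rᵐᵒᵖ) (m : M) (r : Rᵐᵒᵖ) :
    ellMap M m r = r • m := rfl

lemma ellMap_one : ellMap (RR : ModuleCat.{u} Rᵐᵒᵖ) (op 1) = 𝟙 (RR : ModuleCat.{u} Rᵐᵒᵖ) := by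
  apply ModuleCat.hom_ext; apply LinearMap.ext
  exact fun t : Rᵐᵒᵖ => mul_one t

lemma ellMap_comp (M N : ModuleCat.{u} Rᵐᵒᵖ) (f : M ⟶ N) (m : M) :
    ellMap M m ≫ f = ellMap N (f m) := by
  apply ModuleCat.hom_ext; apply LinearMap.ext
  exact fun t : Rᵐᵒᵖ => f.hom.map_smul t m

lemma mulMap_comp_ellMap (M : ModuleCat.{u} Rᵐᵒᵖ) (x : R) (m : M) :
    mulMap R x ≫ ellMap M m = ellMap M ((op x) • m) := by
  apply ModuleCat.hom_ext; apply LinearMap.ext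
  exact fun t : Rᵐᵒᵖ => (smul_smul t (op x) m).symm

/-- The canonical epimorphism from a free module onto `M`. -/
noncomputable def coverMap (M : ModuleCat.{u} Rᵐᵒᵖ) :
    (∐ fun _ : M => (RR : ModuleCat.{u} Rᵐᵒᵖ)) ⟶ M :=
  Sigma.desc fun m => ellMap M m

instance coverMap_epi (M : ModuleCat.{u} Rᵐᵒᵖ) : Epi (coverMap M) := by
  constructor
  intro Z u v h
  apply ModuleCat.hom_ext; apply LinearMap.ext
  intro m
  have h2 : ellMap M m ≫ u = ellMap M m ≫ v := by
    have := congrArg (fun g => (Sigma.ι (fun _ : M => (RR : ModuleCat.{u} Rᵐᵒᵖ)) m) ≫ g) h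
    simpa [coverMap] using this
  have h3 : u ((1 : Rᵐᵒᵖ) • m) = v ((1 : Rᵐᵒᵖ) • m) := LinearMap.congr_fun (congrArg ModuleCat.Hom.hom h2) (1 : Rᵐᵒᵖ)
  simpa using h3

/-- The relations map for the canonical free presentation of `M`. -/
noncomputable def relMap (M : ModuleCat.{u} Rᵐᵒᵖ) :
    (∐ fun _ : (kernel (coverMap M) : ModuleCat.{u} Rᵐᵒᵖ) => (RR : ModuleCat.{u} Rᵐᵒᵖ)) ⟶
      (∐ fun _ : M => (RR : ModuleCat.{u} Rᵐᵒᵖ)) :=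
  coverMap (kernel (coverMap M)) ≫ kernel.ι (coverMap M)

lemma relMap_comp_coverMap (M : ModuleCat.{u} Rᵐᵒᵖ) : relMap M ≫ coverMap M = 0 := by
  rw [relMap, Category.assoc, kernel.condition, comp_zero]

/-- `coverMap M` is a cokernel of `relMap M`. -/
noncomputable def coverIsCokernel (M : ModuleCat.{u} Rᵐᵒᵖ) :
    IsColimit (CokernelCofork.ofπ (coverMap M) (relMap_comp_coverMap M)) := by
  let S₁ := ShortComplex.mk (relMap M) (coverMap M) (relMap_comp_coverMap M)
  let S₂ := ShortComplex.mk (kernel.ι (coverMap M)) (coverMap M) (kernel.condition _)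
  let φ : S₁ ⟶ S₂ :=
    { τ₁ := coverMap (kernel (coverMap M))
      τ₂ := 𝟙 _
      τ₃ := 𝟙 _ }
  haveI : Epi φ.τ₁ := coverMap_epi _
  haveI : IsIso φ.τ₂ := by dsimp only [φ]; infer_instance
  haveI : Mono φ.τ₃ := by dsimp only [φ]; infer_instance
  have hS : S₁.Exact :=
    (ShortComplex.exact_iff_of_epi_of_isIso_of_mono φ).2 (ShortComplex.exact_kernel _)
  haveI : Epi S₁.g := coverMap_epi M
  exact hS.gIsCokernel

variable (k) in
/-- The canonical natural map `M ⟶ Hom_A(F R, F M)`. -/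
noncomputable def wattsSigma (F : ModuleCat.{u} Rᵐᵒᵖ ⥤ A) [F.Additive]
    (ρ : R →+* End (F.obj (RR : ModuleCat.{u} Rᵐᵒᵖ)))
    (hρ : ∀ x : R, ρ x = F.map (mulMap R x))
    (halg : ∀ a : k, ρ (algebraMap k R a) = a • 𝟙 (F.obj (RR : ModuleCat.{u} Rᵐᵒᵖ)))
    (M : ModuleCat.{u} Rᵐᵒᵖ) :
    M ⟶ (homFunctor (⟨F.obj RR, ρ, halg⟩ : LMod k R A)).obj (F.obj M) :=
  ModuleCat.ofHom (X := M)
    (Y := (homFunctor (⟨F.obj RR, ρ, halg⟩ : LMod k R A)).obj (F.obj M)) (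
  { toFun := fun m => F.map (ellMap M m)
    map_add' := fun m n => by
      have h : ellMap M (m + n) = ellMap M m + ellMap M n := by
        apply ModuleCat.hom_ext; apply LinearMap.ext
        exact fun t : Rᵐᵒᵖ => smul_add t m n
      show F.map (ellMap M (m + n)) = F.map (ellMap M m) + F.map (ellMap M n)
      rw [h, F.map_add]
    map_smul' := fun r m => by
      show F.map (ellMap M (r • m)) = ρ r.unop ≫ F.map (ellMap M m)
      rw [hρ, ← F.map_comp, mulMap_comp_ellMap, op_unop] } :
        M →ₗ[Rᵐᵒᵖ] (homFunctor (⟨F.obj RR, ρ, halg⟩ : LMod k R A)).obj (F.obj M))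

lemma wattsSigma_naturality (F : ModuleCat.{u} Rᵐᵒᵖ ⥤ A) [F.Additive]
    (ρ : R →+* End (F.obj (RR : ModuleCat.{u} Rᵐᵒᵖ)))
    (hρ : ∀ x : R, ρ x = F.map (mulMap R x))
    (halg : ∀ a : k, ρ (algebraMap k R a) = a • 𝟙 (F.obj (RR : ModuleCat.{u} Rᵐᵒᵖ)))
    {M N : ModuleCat.{u} Rᵐᵒᵖ} (f : M ⟶ N) :
    f ≫ wattsSigma k F ρ hρ halg N =
      wattsSigma k F ρ hρ halg M ≫
        (homFunctor (⟨F.obj RR, ρ, halg⟩ : LMod k R A)).map (F.map f) := by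
  apply ModuleCat.hom_ext; apply LinearMap.ext
  intro m
  show F.map (ellMap N (f m)) = F.map (ellMap M m) ≫ F.map f
  rw [← F.map_comp, ellMap_comp]

end WattsAux

/-- **Generalized Watts theorem (essential surjectivity).** Let `A` be a cocomplete
`k`-linear abelian category and `F : Mod R ⥤ A` a `k`-linear right exact functor
commuting with direct sums.  Let `𝓕 = F(R)` with left `R`-module structure
`ρ(x) = F(μ_x)`.  Then `F` is naturally isomorphic to `- ⊗_R 𝓕`, i.e. to any left
adjoint of `Hom_A(𝓕, -) : A ⥤ Mod R`. -/
theorem generalized_watts_ess_surj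
    (k : Type*) [CommRing k] (R : Type u) [Ring R] [Algebra k R]
    (A : Type*) [Category.{u} A] [Abelian A] [HasColimits A]
    [CategoryTheory.Linear k A]
    (F : ModuleCat.{u} Rᵐᵒᵖ ⥤ A) [F.Additive] [F.Linear k]
    [PreservesFiniteColimits F]
    [∀ ι : Type u, PreservesColimitsOfShape (Discrete ι) F]
    (ρ : R →+* End (F.obj (RR : ModuleCat.{u} Rᵐᵒᵖ)))
    (hρ : ∀ x : R, ρ x = F.map (mulMap R x))
    (halg : ∀ a : k, ρ (algebraMap k R a) = a • 𝟙 (F.obj (RR : ModuleCat.{u} Rᵐᵒᵖ)))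
    (T : ModuleCat.{u} Rᵐᵒᵖ ⥤ A)
    (adj : T ⊣ homFunctor (⟨F.obj RR, ρ, halg⟩ : LMod k R A)) :
    Nonempty (F ≅ T) := by
  haveI := adj.leftAdjoint_preservesColimits
  haveI : T.IsLeftAdjoint := adj.isLeftAdjoint
  let θ : T ⟶ F :=
    { app := fun M => (adj.homEquiv M (F.obj M)).symm (wattsSigma k F ρ hρ halg M)
      naturality := fun M N f => by
        apply (adj.homEquiv M (F.obj N)).injective
        rw [Adjunction.homEquiv_naturality_left, Adjunction.homEquiv_naturality_right,
          Equiv.apply_symm_apply, Equiv.apply_symm_apply]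
        exact wattsSigma_naturality F ρ hρ halg f }
  have hkey : ∀ (N : A) (α : F.obj RR ⟶ N),
      (adj.homEquiv RR N (θ.app RR ≫ α)) (op (1 : R)) = α := by
    intro N α
    rw [Adjunction.homEquiv_naturality_right]
    have h1 : (adj.homEquiv RR (F.obj RR)) (θ.app RR) = wattsSigma k F ρ hρ halg RR :=
      Equiv.apply_symm_apply _ _
    rw [h1]
    show F.map (ellMap RR (op (1 : R))) ≫ α = α
    rw [ellMap_one, F.map_id, Category.id_comp]
  have hev : ∀ (N : A) (f g : (RR : ModuleCat.{u} Rᵐᵒᵖ) ⟶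
      (homFunctor (⟨F.obj RR, ρ, halg⟩ : LMod k R A)).obj N),
      f (op (1 : R)) = g (op (1 : R)) → f = g := by
    intro N f g h
    apply ModuleCat.hom_ext; apply LinearMap.ext
    exact fun t : Rᵐᵒᵖ => by
      have e1 : f t = t • f (op (1 : R)) :=
        (congrArg f.hom (mul_one t).symm).trans (f.hom.map_smul t (op (1 : R)))
      have e2 : g t = t • g (op (1 : R)) :=
        (congrArg g.hom (mul_one t).symm).trans (g.hom.map_smul t (op (1 : R)))
      rw [e1, e2, h]
  have hbij : ∀ N : A, Function.Bijective (fun α : F.obj RR ⟶ N => θ.app RR ≫ α) := by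
    intro N
    constructor
    · intro α β hab
      have := congrArg (fun g => (adj.homEquiv RR N g) (op (1 : R))) hab
      simp only [hkey] at this; exact this
    · intro g
      refine ⟨(adj.homEquiv RR N g) (op (1 : R)), ?_⟩
      apply (adj.homEquiv RR N).injective
      apply hev
      exact hkey N _
  haveI hRR : IsIso (θ.app RR) := isIso_of_coyoneda_map_bijective _ hbij
  have hcop : ∀ (ι : Type u), IsIso (θ.app (∐ fun _ : ι => (RR : ModuleCat.{u} Rᵐᵒᵖ))) := by
    intro ι
    have hsq : sigmaComparison T (fun _ : ι => (RR : ModuleCat.{u} Rᵐᵒᵖ)) ≫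
        θ.app (∐ fun _ : ι => (RR : ModuleCat.{u} Rᵐᵒᵖ)) =
        Limits.Sigma.map (fun _ : ι => θ.app RR) ≫
          sigmaComparison F (fun _ : ι => (RR : ModuleCat.{u} Rᵐᵒᵖ)) := by
      apply colimit.hom_ext
      rintro ⟨i⟩
      simp only [ι_comp_sigmaComparison_assoc, ι_colimMap_assoc, Sigma.ι_map_assoc, Discrete.natTrans_app,
        ι_comp_sigmaComparison]
      exact θ.naturality _
    have : θ.app (∐ fun _ : ι => (RR : ModuleCat.{u} Rᵐᵒᵖ)) =
        inv (sigmaComparison T (fun _ : ι => (RR : ModuleCat.{u} Rᵐᵒᵖ))) ≫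
          Limits.Sigma.map (fun _ : ι => θ.app RR) ≫
            sigmaComparison F (fun _ : ι => (RR : ModuleCat.{u} Rᵐᵒᵖ)) := by
      rw [← hsq, IsIso.inv_hom_id_assoc]
    rw [this]
    infer_instance
  have hcoker : ∀ {P Q : ModuleCat.{u} Rᵐᵒᵖ} (d : P ⟶ Q),
      IsIso (θ.app P) → IsIso (θ.app Q) → IsIso (θ.app (cokernel d)) := by
    intro P Q d hP hQ
    have hsq : cokernelComparison d T ≫ θ.app (cokernel d) =
        cokernel.map (T.map d) (F.map d) (θ.app P) (θ.app Q) (θ.naturality d) ≫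
          cokernelComparison d F := by
      rw [← cancel_epi (cokernel.π (T.map d))]
      rw [π_comp_cokernelComparison_assoc]
      rw [cokernel.π_desc_assoc, Category.assoc, π_comp_cokernelComparison]
      exact θ.naturality _
    have heq : θ.app (cokernel d) = inv (cokernelComparison d T) ≫
        cokernel.map (T.map d) (F.map d) (θ.app P) (θ.app Q) (θ.naturality d) ≫
          cokernelComparison d F := by
      rw [← hsq, IsIso.inv_hom_id_assoc]
    rw [heq]
    haveI : IsIso (cokernel.map (T.map d) (F.map d) (θ.app P) (θ.app Q) (θ.naturality d)) := by
      have : cokernel.map (T.map d) (F.map d) (θ.app P) (θ.app Q) (θ.naturality d) =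
          (cokernel.mapIso (T.map d) (F.map d) (asIso (θ.app P)) (asIso (θ.app Q))
            (θ.naturality d)).hom := rfl
      rw [this]
      infer_instance
    infer_instance
  have hM : ∀ M : ModuleCat.{u} Rᵐᵒᵖ, IsIso (θ.app M) := by
    intro M
    have e : (cokernel (relMap M) : ModuleCat.{u} Rᵐᵒᵖ) ≅ M :=
      IsColimit.coconePointUniqueUpToIso (cokernelIsCokernel (relMap M)) (coverIsCokernel M)
    haveI h1 : IsIso (θ.app (cokernel (relMap M))) :=
      hcoker (relMap M) (hcop _) (hcop _)
    have heq : θ.app M = T.map e.inv ≫ θ.app (cokernel (relMap M)) ≫ F.map e.hom := by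
      rw [← θ.naturality, ← Category.assoc, ← T.map_comp, e.inv_hom_id, T.map_id,
        Category.id_comp]
    rw [heq]
    infer_instance
  haveI : ∀ M, IsIso (θ.app M) := hM
  haveI : IsIso θ := NatIso.isIso_of_isIso_app θ
  exact ⟨(asIso θ).symm⟩
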